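/- Let (F ⊣ G, ε, η) be an idempotent adjunction (the multiplication GεF of the induced monad is an isomorphism) with F : 𝔹 ⥤ 𝔸 left adjoint to G : 𝔸 ⥤ 𝔹. Then the adjunction is monadic — i.e. the Eilenberg–Moore comparison functor Monad.comparison adj : 𝔸 ⥤ (adj.toMonad).Algebra is an equivalence — if and only if it is Kleisli, i.e. if and only if F is essentially surjective. -/

import Mathlib

open CategoryTheory

section Stmt10Aux

variable {𝔸 𝔹 : Type*} [Category 𝔸] [Category 𝔹] {F : 𝔹 ⥤ 𝔸} {G : 𝔸 ⥤ 𝔹}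
variable (adj : F ⊣ G) [IsIso adj.toMonad.μ]

lemma stmt10_eta_T (X : 𝔹) :
    adj.toMonad.η.app ((adj.toMonad : 𝔹 ⥤ 𝔹).obj X)
      = (adj.toMonad : 𝔹 ⥤ 𝔹).map (adj.toMonad.η.app X) := by
  rw [← cancel_mono (adj.toMonad.μ.app X), adj.toMonad.left_unit, adj.toMonad.right_unit]
  rfl

lemma stmt10_algebra_a_eta (X : adj.toMonad.Algebra) :
    X.a ≫ adj.toMonad.η.app X.A = 𝟙 _ := by
  have h := adj.toMonad.η.naturality X.a
  simp only [Functor.id_map] at h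
  rw [h, stmt10_eta_T adj, ← Functor.map_comp, X.unit]
  exact (adj.toMonad : 𝔹 ⥤ 𝔹).map_id _

lemma stmt10_isIso_counit_app_F (b : 𝔹) : IsIso (adj.counit.app (F.obj b)) := by
  refine ⟨F.map (adj.unit.app b), ?_, adj.left_triangle_components b⟩
  apply (adj.homEquiv _ _).injective
  rw [adj.homEquiv_unit, adj.homEquiv_unit]
  simp only [Functor.map_comp, Adjunction.right_triangle_components_assoc]
  erw [G.map_id, Category.comp_id]
  exact (stmt10_eta_T adj b).symm

end Stmt10Aux

/-- an idempotent adjunction `(F ⊣ G, ε, η)` is monadic (the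
Eilenberg–Moore comparison functor is an equivalence) if and only if it is Kleisli,
i.e. if and only if the left adjoint `F` is essentially surjective. -/
theorem stmt10 {𝔸 𝔹 : Type*} [Category 𝔸] [Category 𝔹] {F : 𝔹 ⥤ 𝔸} {G : 𝔸 ⥤ 𝔹}
    (adj : F ⊣ G) [IsIso adj.toMonad.μ] :
    (Monad.comparison adj).IsEquivalence ↔ F.EssSurj := by
  constructor
  · intro h
    constructor
    intro a
    -- comparison.obj (F.obj (G.obj a)) ≅ comparison.obj a, via η_{Ga}
    have hiso : IsIso (adj.unit.app (G.obj a)) := by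
      refine ⟨G.map (adj.counit.app a), adj.right_triangle_components a, ?_⟩
      exact stmt10_algebra_a_eta adj ((Monad.comparison adj).obj a)
    have e : (Monad.comparison adj).obj (F.obj (G.obj a)) ≅ (Monad.comparison adj).obj a := by
      refine (Monad.Algebra.isoMk (@asIso _ _ _ _ (adj.unit.app (G.obj a)) hiso) ?_).symm
      · show G.map (F.map (adj.unit.app (G.obj a))) ≫ G.map (adj.counit.app (F.obj (G.obj a))) = G.map (adj.counit.app a) ≫ adj.unit.app (G.obj a)
        erw [← G.map_comp, adj.left_triangle_components, G.map_id]
        exact (stmt10_algebra_a_eta adj ((Monad.comparison adj).obj a)).symm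
    exact ⟨G.obj a, ⟨(Monad.comparison adj).preimageIso e⟩⟩
  · intro h
    -- counit is iso, so G fully faithful
    have hc : ∀ a : 𝔸, IsIso (adj.counit.app a) := by
      intro a
      obtain ⟨b, ⟨i⟩⟩ := h.mem_essImage a
      have : adj.counit.app a = F.map (G.map i.inv) ≫ adj.counit.app (F.obj b) ≫ i.hom := by
        rw [← Category.assoc, adj.counit_naturality i.inv, Category.assoc,
          Iso.inv_hom_id, Category.comp_id]
      rw [this]
      have := stmt10_isIso_counit_app_F adj b
      infer_instance
    have : IsIso adj.counit := NatIso.isIso_of_isIso_app _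
    have hff : G.Full := adj.fullyFaithfulROfIsIsoCounit.full
    have hfa : G.Faithful := adj.fullyFaithfulROfIsIsoCounit.faithful
    have full : (Monad.comparison adj).Full := Reflective.comparison_full adj
    have essSurj : (Monad.comparison adj).EssSurj := by
      constructor
      intro X
      have hiso : IsIso (adj.toMonad.η.app X.A) := ⟨X.a, X.unit, stmt10_algebra_a_eta adj X⟩
      refine ⟨F.obj X.A, ⟨?_⟩⟩
      refine (Monad.Algebra.isoMk (@asIso _ _ _ _ (adj.toMonad.η.app X.A) hiso) ?_).symm
      · show (adj.toMonad : 𝔹 ⥤ 𝔹).map (adj.toMonad.η.app X.A) ≫ adj.toMonad.μ.app X.A = X.a ≫ adj.toMonad.η.app X.A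
        have : (adj.toMonad : 𝔹 ⥤ 𝔹).map (adj.toMonad.η.app X.A) ≫ adj.toMonad.μ.app X.A
            = 𝟙 _ := adj.toMonad.right_unit X.A
        simpa using this.trans (stmt10_algebra_a_eta adj X).symm
    exact { }
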